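/- Let (A; {E_i}; A*; {E*_i}) be a Leonard system on V. For 0 ≤ i ≤ d, the subspace τ_i(A)E*_0V equals (E*_0V + ⋯ + E*_iV) ∩ (E_iV + ⋯ + E_dV), where τ_i(λ) = (λ-θ_0)⋯(λ-θ_{i-1}). In particular this intersection is one-dimensional. -/

import Mathlib

open Polynomial

/-- The primitive idempotent `E_i = ∏_{j ≠ i} (A - θ_j I)/(θ_i - θ_j)` of a
multiplicity-free operator `A` with eigenvalues `θ_0, …, θ_d`. -/
noncomputable def primIdem {K : Type} [Field K] {V : Type} [AddCommGroup V] [Module K V]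
    {d : ℕ} (A : Module.End K V) (θ : Fin (d+1) → K) (i : Fin (d+1)) : Module.End K V :=
  Polynomial.aeval A (∏ j ∈ Finset.univ.erase i, ((θ i - θ j)⁻¹ • (X - C (θ j))))

/-- The polynomial `τ_i(λ) = (λ-θ_0)(λ-θ_1)⋯(λ-θ_{i-1})`. -/
noncomputable def tauP {K : Type} [Field K] (d : ℕ) (θ : Fin (d+1) → K) (i : ℕ) :
    Polynomial K :=
  ∏ k ∈ Finset.univ.filter (fun k : Fin (d+1) => (k : ℕ) < i), (X - C (θ k))

/-- The polynomial `η_i(λ) = (λ-θ_d)(λ-θ_{d-1})⋯(λ-θ_{d-i+1})`. -/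
noncomputable def etaP {K : Type} [Field K] (d : ℕ) (θ : Fin (d+1) → K) (i : ℕ) :
    Polynomial K :=
  ∏ k ∈ Finset.univ.filter (fun k : Fin (d+1) => d - i < (k : ℕ)), (X - C (θ k))

/-- A Leonard system on a `(d+1)`-dimensional vector space `V` over a field `K`. -/
structure LeonardSystem (K V : Type) [Field K] [AddCommGroup V] [Module K V] (d : ℕ) where
  A : Module.End K V
  As : Module.End K V
  θ : Fin (d+1) → K
  θs : Fin (d+1) → K
  hfin : FiniteDimensional K V
  hdim : Module.finrank K V = d + 1
  θ_inj : Function.Injective θ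
  θs_inj : Function.Injective θs
  hEig : ∀ i, Module.End.HasEigenvalue A (θ i)
  hEigs : ∀ i, Module.End.HasEigenvalue As (θs i)
  hFar : ∀ i j : Fin (d+1), ((i:ℕ) + 1 < j ∨ (j:ℕ) + 1 < i) →
    primIdem A θ i * As * primIdem A θ j = 0
  hNear : ∀ i j : Fin (d+1), ((i:ℕ) + 1 = j ∨ (j:ℕ) + 1 = i) →
    primIdem A θ i * As * primIdem A θ j ≠ 0
  hFars : ∀ i j : Fin (d+1), ((i:ℕ) + 1 < j ∨ (j:ℕ) + 1 < i) →
    primIdem As θs i * A * primIdem As θs j = 0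
  hNears : ∀ i j : Fin (d+1), ((i:ℕ) + 1 = j ∨ (j:ℕ) + 1 = i) →
    primIdem As θs i * A * primIdem As θs j ≠ 0

namespace LeonardSystem

variable {K : Type} [Field K] {V : Type} [AddCommGroup V] [Module K V] {d : ℕ}
  (L : LeonardSystem K V d)

/-- `E_i`, the `i`-th primitive idempotent of `A`. -/
noncomputable def E (i : Fin (d+1)) : Module.End K V := primIdem L.A L.θ i

/-- `E*_i`, the `i`-th primitive idempotent of `A*`. -/
noncomputable def Es (i : Fin (d+1)) : Module.End K V := primIdem L.As L.θs i

/-- `τ_i(A)`. -/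
noncomputable def tau (i : ℕ) : Module.End K V := Polynomial.aeval L.A (tauP d L.θ i)

/-- `η_i(A)`. -/
noncomputable def eta (i : ℕ) : Module.End K V := Polynomial.aeval L.A (etaP d L.θ i)

/-- The first split sequence `φ_i = (θ*_0-θ*_i) tr(τ_i(A)E*_0)/tr(τ_{i-1}(A)E*_0)`,
meaningful for `1 ≤ i ≤ d`. -/
noncomputable def φ (i : ℕ) : K :=
  if h : i < d + 1 then
    (L.θs 0 - L.θs ⟨i, h⟩) * (LinearMap.trace K V (L.tau i * L.Es 0))
      / (LinearMap.trace K V (L.tau (i-1) * L.Es 0))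
  else 0

/-- The second split sequence `ϕ_i = (θ*_0-θ*_i) tr(η_i(A)E*_0)/tr(η_{i-1}(A)E*_0)`,
meaningful for `1 ≤ i ≤ d`. -/
noncomputable def ϕ (i : ℕ) : K :=
  if h : i < d + 1 then
    (L.θs 0 - L.θs ⟨i, h⟩) * (LinearMap.trace K V (L.eta i * L.Es 0))
      / (LinearMap.trace K V (L.eta (i-1) * L.Es 0))
  else 0

/-- The switching element `S = ∑_r (ϕ_d⋯ϕ_{d-r+1})/(φ_1⋯φ_r) E_r`. -/
noncomputable def S : Module.End K V :=
  ∑ r : Fin (d+1),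
    ((∏ k ∈ Finset.Icc (d - (r:ℕ) + 1) d, L.ϕ k) / (∏ k ∈ Finset.Icc 1 (r:ℕ), L.φ k)) • L.E r

/-- The dual switching element `S* = ∑_r (ϕ_1⋯ϕ_r)/(φ_1⋯φ_r) E*_r`. -/
noncomputable def Ss : Module.End K V :=
  ∑ r : Fin (d+1),
    ((∏ k ∈ Finset.Icc 1 (r:ℕ), L.ϕ k) / (∏ k ∈ Finset.Icc 1 (r:ℕ), L.φ k)) • L.Es r

end LeonardSystem

namespace LSAux

variable {K : Type} [Field K] {V : Type} [AddCommGroup V] [Module K V] {d : ℕ}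

lemma primIdem_eq (A : Module.End K V) (θ : Fin (d+1) → K) (i : Fin (d+1)) :
    primIdem A θ i = Polynomial.aeval A (Lagrange.basis Finset.univ θ i) := by
  unfold primIdem Lagrange.basis
  congr 1
  refine Finset.prod_congr rfl fun j _ => ?_
  rw [Lagrange.basisDivisor, Polynomial.smul_eq_C_mul]

variable (A : Module.End K V) (θ : Fin (d+1) → K) [FiniteDimensional K V]

lemma charpoly_eq (hdim : Module.finrank K V = d + 1) (hinj : Function.Injective θ)
    (hEig : ∀ i, Module.End.HasEigenvalue A (θ i)) :
    (∏ k, (X - C (θ k))) = A.charpoly := by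
  have hdvd : (∏ k, (X - C (θ k))) ∣ A.charpoly := by
    refine dvd_trans ?_ (A.minpoly_dvd_charpoly)
    refine Finset.prod_dvd_of_coprime ?_ ?_
    · exact (Polynomial.pairwise_coprime_X_sub_C hinj).set_pairwise _
    · intro i _
      rw [Polynomial.dvd_iff_isRoot]
      exact (Module.End.hasEigenvalue_iff_isRoot).mp (hEig i)
  have hm1 : (∏ k, (X - C (θ k))).Monic :=
    Polynomial.monic_prod_of_monic _ _ fun k _ => Polynomial.monic_X_sub_C _
  have hm2 := A.charpoly_monic
  have hdeg : (∏ k, (X - C (θ k))).natDegree = A.charpoly.natDegree := by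
    rw [A.charpoly_natDegree, hdim, Polynomial.natDegree_prod]
    · simp [Polynomial.natDegree_X_sub_C]
    · intro k _; exact Polynomial.X_sub_C_ne_zero _
  exact (Polynomial.eq_of_monic_of_dvd_of_natDegree_le hm1 hm2 hdvd hdeg.ge).symm



set_option linter.unusedSectionVars false

lemma prodErase_dvd_basis (i : Fin (d+1)) :
    (∏ k ∈ Finset.univ.erase i, (X - C (θ k))) ∣ Lagrange.basis Finset.univ θ i :=
  Finset.prod_dvd_prod_of_dvd _ _ fun k _ => by
    rw [Lagrange.basisDivisor]; exact dvd_mul_left _ _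

lemma X_sub_C_dvd_basis {i j : Fin (d+1)} (hij : j ≠ i) :
    (X - C (θ j)) ∣ Lagrange.basis Finset.univ θ i := by
  refine dvd_trans ?_ (Finset.dvd_prod_of_mem _ (Finset.mem_erase.mpr ⟨hij, Finset.mem_univ j⟩))
  rw [Lagrange.basisDivisor]; exact dvd_mul_left _ _

lemma prod_dvd_X_sub_C_mul_basis (i : Fin (d+1)) :
    (∏ k, (X - C (θ k))) ∣ (X - C (θ i)) * Lagrange.basis Finset.univ θ i := by
  rw [← Finset.mul_prod_erase _ _ (Finset.mem_univ i)]
  exact mul_dvd_mul dvd_rfl (prodErase_dvd_basis θ i)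

variable (hdim : Module.finrank K V = d + 1) (hinj : Function.Injective θ)
  (hEig : ∀ i, Module.End.HasEigenvalue A (θ i))

include hinj in
lemma E_apply_self {i : Fin (d+1)} {u : V} (h : A.HasEigenvector (θ i) u) :
    primIdem A θ i u = u := by
  rw [primIdem_eq, Module.End.aeval_apply_of_hasEigenvector h,
    Lagrange.eval_basis_self hinj.injOn (Finset.mem_univ i), one_smul]

lemma E_apply_ne {i j : Fin (d+1)} (hij : i ≠ j) {u : V} (h : A.HasEigenvector (θ j) u) :
    primIdem A θ i u = 0 := by
  rw [primIdem_eq, Module.End.aeval_apply_of_hasEigenvector h,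
    Lagrange.eval_basis_of_ne hij (Finset.mem_univ j), zero_smul]

include hinj in
lemma E_sum : (∑ i, primIdem A θ i) = 1 := by
  simp_rw [primIdem_eq]
  rw [← map_sum, Lagrange.sum_basis hinj.injOn Finset.univ_nonempty, map_one]

include hdim hinj hEig

lemma aeval_eq_zero_of_dvd {p : Polynomial K} (hp : (∏ k, (X - C (θ k))) ∣ p) :
    Polynomial.aeval A p = 0 := by
  obtain ⟨q, rfl⟩ := hp
  rw [map_mul, charpoly_eq A θ hdim hinj hEig, A.aeval_self_charpoly, zero_mul]

lemma E_orth {i j : Fin (d+1)} (hij : i ≠ j) :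
    primIdem A θ i * primIdem A θ j = 0 := by
  rw [primIdem_eq, primIdem_eq, ← map_mul]
  refine aeval_eq_zero_of_dvd A θ hdim hinj hEig ?_
  rw [← Finset.mul_prod_erase _ _ (Finset.mem_univ j)]
  exact mul_dvd_mul (X_sub_C_dvd_basis θ (Ne.symm hij)) (prodErase_dvd_basis θ j)

lemma aeval_mul_E (p : Polynomial K) (i : Fin (d+1)) :
    Polynomial.aeval A p * primIdem A θ i = p.eval (θ i) • primIdem A θ i := by
  obtain ⟨q, hq⟩ := Polynomial.X_sub_C_dvd_sub_C_eval (a := θ i) (p := p)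
  have h0 : Polynomial.aeval A ((p - C (p.eval (θ i))) * Lagrange.basis Finset.univ θ i) = 0 := by
    refine aeval_eq_zero_of_dvd A θ hdim hinj hEig ?_
    rw [hq, mul_right_comm]
    exact Dvd.dvd.mul_right (prod_dvd_X_sub_C_mul_basis θ i) q
  rw [sub_mul, map_sub, map_mul, map_mul, sub_eq_zero] at h0
  rw [primIdem_eq, h0, aeval_C, Algebra.algebraMap_eq_smul_one, smul_mul_assoc, one_mul]

lemma E_idem (i : Fin (d+1)) : primIdem A θ i * primIdem A θ i = primIdem A θ i := by
  conv_rhs => rw [← mul_one (primIdem A θ i), ← E_sum A θ hinj]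
  rw [Finset.mul_sum]
  rw [Finset.sum_eq_single i (fun j _ hj => E_orth A θ hdim hinj hEig (Ne.symm hj)) (by simp)]

variable (u : Fin (d+1) → V) (hu : ∀ i, A.HasEigenvector (θ i) (u i))

include hu

lemma range_E (i : Fin (d+1)) :
    LinearMap.range (primIdem A θ i) = Submodule.span K {u i} := by
  have li : LinearIndependent K u := A.eigenvectors_linearIndependent' θ hinj u hu
  have hcard : Fintype.card (Fin (d+1)) = Module.finrank K V := by
    rw [hdim]; exact Fintype.card_fin _
  set B := basisOfLinearIndependentOfCardEqFinrank li hcard with hB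
  have hBu : ∀ j, B j = u j := fun j => by
    rw [hB, coe_basisOfLinearIndependentOfCardEqFinrank]
  refine le_antisymm ?_ ?_
  · rintro _ ⟨w, rfl⟩
    have hw : w = ∑ j, B.repr w j • u j := by
      conv_lhs => rw [← B.sum_repr w]
      exact Finset.sum_congr rfl fun j _ => by rw [hBu]
    rw [hw, map_sum]
    have hterm : ∀ j, primIdem A θ i (B.repr w j • u j) =
        if j = i then B.repr w i • u i else 0 := by
      intro j
      rw [map_smul]
      by_cases hji : j = i
      · subst hji; rw [E_apply_self A θ hinj (hu j), if_pos rfl]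
      · rw [E_apply_ne A θ (Ne.symm hji) (hu j), smul_zero, if_neg hji]
    rw [Finset.sum_congr rfl fun j _ => hterm j,
      Finset.sum_ite_eq' _ i, if_pos (Finset.mem_univ i)]
    exact Submodule.smul_mem _ _ (Submodule.mem_span_singleton_self _)
  · rw [Submodule.span_le, Set.singleton_subset_iff]
    exact ⟨u i, E_apply_self A θ hinj (hu i)⟩

lemma sum_range_E (s : Finset (Fin (d+1))) :
    (∑ j ∈ s, LinearMap.range (primIdem A θ j)) = Submodule.span K (u '' ↑s) := by
  classical
  induction s using Finset.induction with
  | empty => simp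
  | insert _ _ h ih =>
    rw [Finset.sum_insert h, ih, range_E A θ hdim hinj hEig u hu, Finset.coe_insert,
      Set.image_insert_eq, Submodule.span_insert, Submodule.add_eq_sup]

omit hu

lemma finrank_span_image (li : LinearIndependent K u) (s : Finset (Fin (d+1))) :
    Module.finrank K (Submodule.span K (u '' ↑s)) = s.card := by
  have li' : LinearIndependent K (fun j : (s : Set (Fin (d+1))) => u j) :=
    li.comp _ Subtype.val_injective
  have h := finrank_span_eq_card li'
  rw [← Set.image_eq_range] at h
  rw [h]
  simp

end LSAux

namespace LSAux

variable {K : Type} [Field K] {V : Type} [AddCommGroup V] [Module K V] {d : ℕ}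
  (A : Module.End K V) (θ : Fin (d+1) → K) [FiniteDimensional K V]
  (hdim : Module.finrank K V = d + 1) (hinj : Function.Injective θ)
  (hEig : ∀ i, Module.End.HasEigenvalue A (θ i))

include hdim hinj hEig

lemma E_mul_aeval (p : Polynomial K) (j : Fin (d+1)) :
    primIdem A θ j * Polynomial.aeval A p = p.eval (θ j) • primIdem A θ j := by
  rw [primIdem_eq, ← map_mul, mul_comm, map_mul, ← primIdem_eq]
  exact aeval_mul_E A θ hdim hinj hEig p j

variable (B : Module.End K V)
  (hband : ∀ i j : Fin (d+1), ((i:ℕ) + 1 < j ∨ (j:ℕ) + 1 < i) →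
    primIdem A θ i * B * primIdem A θ j = 0)

include hband

lemma band_pow : ∀ n, ∀ i j : Fin (d+1), ((i:ℕ) + n < (j:ℕ) ∨ (j:ℕ) + n < (i:ℕ)) →
    primIdem A θ i * B ^ n * primIdem A θ j = 0 := by
  intro n
  induction n with
  | zero =>
    intro i j h
    rw [pow_zero, mul_one]
    exact E_orth A θ hdim hinj hEig (fun e => by subst e; omega)
  | succ n ih =>
    intro i j h
    have h1 : (1 : Module.End K V) = ∑ m, primIdem A θ m * primIdem A θ m := by
      rw [← E_sum A θ hinj]
      exact Finset.sum_congr rfl fun m _ => (E_idem A θ hdim hinj hEig m).symm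
    have expand : primIdem A θ i * B ^ (n+1) * primIdem A θ j =
        ∑ m, primIdem A θ i * B * primIdem A θ m *
          (primIdem A θ m * B ^ n * primIdem A θ j) := by
      calc primIdem A θ i * B ^ (n+1) * primIdem A θ j
          = primIdem A θ i * B * 1 * (B ^ n * primIdem A θ j) := by
            simp only [pow_succ', mul_one, mul_assoc, one_mul]
        _ = ∑ m, primIdem A θ i * B * (primIdem A θ m * primIdem A θ m) *
              (B ^ n * primIdem A θ j) := by
            rw [h1, Finset.mul_sum, Finset.sum_mul]
        _ = ∑ m, primIdem A θ i * B * primIdem A θ m *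
              (primIdem A θ m * B ^ n * primIdem A θ j) :=
            Finset.sum_congr rfl fun m _ => by simp only [mul_assoc]
    rw [expand]
    refine Finset.sum_eq_zero fun m _ => ?_
    by_cases hm : (i:ℕ) + 1 < (m:ℕ) ∨ (m:ℕ) + 1 < (i:ℕ)
    · rw [hband i m hm, zero_mul]
    · push_neg at hm
      rw [ih m j (by omega), mul_zero]

lemma band_aeval (p : Polynomial K) (i j : Fin (d+1))
    (h : (i:ℕ) + p.natDegree < (j:ℕ) ∨ (j:ℕ) + p.natDegree < (i:ℕ)) :
    primIdem A θ i * Polynomial.aeval B p * primIdem A θ j = 0 := by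
  rw [Polynomial.aeval_eq_sum_range, Finset.mul_sum, Finset.sum_mul]
  refine Finset.sum_eq_zero fun k hk => ?_
  have hk' : k ≤ p.natDegree := Nat.lt_succ_iff.mp (Finset.mem_range.mp hk)
  rw [mul_smul_comm, smul_mul_assoc,
    band_pow A θ hdim hinj hEig B hband k i j (by omega), smul_zero]

variable
  (hnear : ∀ i j : Fin (d+1), ((i:ℕ) + 1 = (j:ℕ) ∨ (j:ℕ) + 1 = (i:ℕ)) →
    primIdem A θ i * B * primIdem A θ j ≠ 0)
  (u : Fin (d+1) → V) (hu : ∀ i, A.HasEigenvector (θ i) (u i))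
  (q : ℕ → Polynomial K) (hq0 : q 0 = 1)
  (hqdeg : ∀ n, (q n).natDegree ≤ n)
  (hqstep : ∀ n, n + 1 < d + 1 → ∃ a : K, q (n+1) = q n * (X - C a))

include hnear hu hq0 hqdeg hqstep

lemma chain_ne_zero : ∀ n, (hn : n < d + 1) →
    primIdem A θ ⟨n, hn⟩ (Polynomial.aeval B (q n) (u 0)) ≠ 0 := by
  intro n
  induction n with
  | zero =>
    intro hn
    have h0 : (⟨0, hn⟩ : Fin (d+1)) = 0 := rfl
    rw [hq0, map_one, Module.End.one_apply, h0, E_apply_self A θ hinj (hu 0)]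
    exact (hu 0).right
  | succ n ih =>
    intro hn
    have hn' : n < d + 1 := by omega
    set i : Fin (d+1) := ⟨n, hn'⟩ with hi
    set i' : Fin (d+1) := ⟨n+1, hn⟩ with hi'
    have hvi : (i:ℕ) = n := rfl
    have hvi' : (i':ℕ) = n + 1 := rfl
    have hne' : i' ≠ i := Fin.ne_of_val_ne (by rw [hvi, hvi']; omega)
    set y : V := Polynomial.aeval B (q n) (u 0) with hy
    have hx := ih hn'
    have hxmem : primIdem A θ i y ∈ Submodule.span K {u i} := by
      rw [← range_E A θ hdim hinj hEig u hu i]; exact ⟨y, rfl⟩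
    obtain ⟨a, ha⟩ := Submodule.mem_span_singleton.mp hxmem
    have ha0 : a ≠ 0 := fun h => hx (by rw [← ha, h, zero_smul])
    obtain ⟨c, hfac⟩ := hqstep n hn
    have hz : Polynomial.aeval B (q (n+1)) (u 0) = (B - c • 1) y := by
      rw [hfac, mul_comm, map_mul, Module.End.mul_apply, ← hy]
      congr 1
      rw [map_sub, aeval_X, aeval_C, Algebra.algebraMap_eq_smul_one]
    have hop : primIdem A θ i' * (B - c • 1) =
        ∑ m, primIdem A θ i' * (B - c • 1) * primIdem A θ m := by
      rw [← Finset.mul_sum, E_sum A θ hinj, mul_one]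
    have hdecomp : primIdem A θ i' (Polynomial.aeval B (q (n+1)) (u 0)) =
        ∑ m, (primIdem A θ i' * (B - c • 1) * primIdem A θ m) y := by
      rw [hz, ← Module.End.mul_apply, ← LinearMap.sum_apply]
      exact LinearMap.congr_fun hop y
    have hsingle : (∑ m, (primIdem A θ i' * (B - c • 1) * primIdem A θ m) y) =
        (primIdem A θ i' * (B - c • 1) * primIdem A θ i) y := by
      refine Finset.sum_eq_single i (fun m _ hmi => ?_)
        (fun h => absurd (Finset.mem_univ i) h)
      have hmval : (m:ℕ) ≠ n := fun e => hmi (Fin.ext (by rw [hvi]; exact e))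
      rcases Nat.lt_or_ge (m:ℕ) n with hlt | hge
      · have hO : primIdem A θ i' * (B - c • 1) * primIdem A θ m = 0 := by
          rw [mul_sub, sub_mul, hband i' m (Or.inr (by rw [hvi']; omega)),
            mul_smul_comm, mul_one, smul_mul_assoc,
            E_orth A θ hdim hinj hEig (Fin.ne_of_val_ne (by rw [hvi']; omega)),
            smul_zero, sub_zero]
        rw [hO, LinearMap.zero_apply]
      · have hgt : n < (m:ℕ) := lt_of_le_of_ne hge (Ne.symm hmval)
        have hEmy : primIdem A θ m y = 0 := by
          have hu0 : u 0 = primIdem A θ 0 (u 0) := (E_apply_self A θ hinj (hu 0)).symm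
          have hband0 := band_aeval A θ hdim hinj hEig B hband (q n) m 0
            (Or.inr (by simp only [Fin.val_zero, zero_add]; exact lt_of_le_of_lt (hqdeg n) hgt))
          rw [hy, hu0, ← Module.End.mul_apply, ← Module.End.mul_apply, hband0,
            LinearMap.zero_apply]
        rw [Module.End.mul_apply, Module.End.mul_apply, hEmy, map_zero, map_zero]
    rw [hdecomp, hsingle, Module.End.mul_apply, Module.End.mul_apply, ← ha, map_smul, map_smul]
    have hkey : primIdem A θ i' ((B - c • 1) (u i)) ≠ 0 := by
      have hsimp : primIdem A θ i' ((B - c • 1) (u i)) = primIdem A θ i' (B (u i)) := by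
        rw [LinearMap.sub_apply, LinearMap.smul_apply, Module.End.one_apply, map_sub,
          map_smul, E_apply_ne A θ hne' (hu i), smul_zero, sub_zero]
      rw [hsimp]
      intro h0
      refine hnear i' i (Or.inr (by rw [hvi, hvi'])) ?_
      apply LinearMap.ext
      intro x
      have hxm : primIdem A θ i x ∈ Submodule.span K {u i} := by
        rw [← range_E A θ hdim hinj hEig u hu i]; exact ⟨x, rfl⟩
      obtain ⟨b, hb⟩ := Submodule.mem_span_singleton.mp hxm
      rw [Module.End.mul_apply, Module.End.mul_apply, ← hb, map_smul, map_smul, h0,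
        smul_zero, LinearMap.zero_apply]
    exact fun h => hkey ((smul_eq_zero.mp h).resolve_left ha0)

end LSAux

namespace LSAux

variable {K : Type} [Field K] {d : ℕ}

lemma tauP_zero (θf : Fin (d+1) → K) : tauP d θf 0 = 1 := by
  unfold tauP
  rw [Finset.filter_false_of_mem (fun k _ => by omega), Finset.prod_empty]

lemma tauP_natDegree_le (θf : Fin (d+1) → K) (n : ℕ) : (tauP d θf n).natDegree ≤ n := by
  refine le_trans (Polynomial.natDegree_prod_le _ _) ?_
  have h1 : ∀ k ∈ Finset.univ.filter (fun k : Fin (d+1) => (k:ℕ) < n),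
      (X - C (θf k)).natDegree = 1 := fun k _ => Polynomial.natDegree_X_sub_C _
  rw [Finset.sum_congr rfl h1]
  rw [Finset.sum_const, smul_eq_mul, mul_one]
  calc (Finset.univ.filter (fun k : Fin (d+1) => (k:ℕ) < n)).card
      ≤ (Finset.range n).card := by
        refine Finset.card_le_card_of_injOn Fin.val
          (fun k hk => Finset.mem_range.mpr (Finset.mem_filter.mp hk).2) ?_
        intro a _ b _ e
        exact Fin.ext e
    _ = n := Finset.card_range n

lemma tauP_step (θf : Fin (d+1) → K) (n : ℕ) (hn : n < d) :
    tauP d θf (n+1) = tauP d θf n * (X - C (θf ⟨n, by omega⟩)) := by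
  unfold tauP
  have hset : Finset.univ.filter (fun k : Fin (d+1) => (k:ℕ) < n+1)
      = insert (⟨n, by omega⟩ : Fin (d+1))
          (Finset.univ.filter fun k : Fin (d+1) => (k:ℕ) < n) := by
    ext k
    simp only [Finset.mem_insert, Finset.mem_filter, Finset.mem_univ, true_and, Fin.ext_iff]
    omega
  rw [hset, Finset.prod_insert (by simp), mul_comm]

lemma tauP_eval_eq_zero (θf : Fin (d+1) → K) {j : Fin (d+1)} {n : ℕ} (hj : (j:ℕ) < n) :
    (tauP d θf n).eval (θf j) = 0 := by
  unfold tauP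
  rw [Polynomial.eval_prod]
  exact Finset.prod_eq_zero (Finset.mem_filter.mpr ⟨Finset.mem_univ j, hj⟩) (by simp)

end LSAux


/-- `τ_i(A) E*_0 V = (E*_0V+⋯+E*_iV) ∩ (E_iV+⋯+E_dV)`, a one-dimensional
subspace. -/
theorem LeonardSystem.tau_Es0_eq_inf {K : Type} [Field K] {V : Type}
    [AddCommGroup V] [Module K V] {d : ℕ} (L : LeonardSystem K V d) (i : Fin (d+1)) :
    Submodule.map (L.tau (i:ℕ)) (LinearMap.range (L.Es 0)) =
      (∑ j ∈ Finset.univ.filter (fun j : Fin (d+1) => j ≤ i), LinearMap.range (L.Es j)) ⊓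
      (∑ j ∈ Finset.univ.filter (fun j : Fin (d+1) => i ≤ j), LinearMap.range (L.E j)) ∧
    Module.finrank K
      ((∑ j ∈ Finset.univ.filter (fun j : Fin (d+1) => j ≤ i), LinearMap.range (L.Es j)) ⊓
       (∑ j ∈ Finset.univ.filter (fun j : Fin (d+1) => i ≤ j), LinearMap.range (L.E j)) :
        Submodule K V) = 1 := by
  classical
  haveI := L.hfin
  have hdim := L.hdim
  choose u hu using fun k => (L.hEig k).exists_hasEigenvector
  choose us hus using fun k => (L.hEigs k).exists_hasEigenvector
  set v : V := us 0 with hv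
  set w : Fin (d+1) → V := fun m => Polynomial.aeval L.A (tauP d L.θ (m:ℕ)) v with hw
  have hchain : ∀ m : Fin (d+1), primIdem L.As L.θs m (w m) ≠ 0 := by
    intro m
    have h := LSAux.chain_ne_zero L.As L.θs hdim L.θs_inj L.hEigs L.A L.hFars L.hNears us hus
      (fun n => tauP d L.θ n) (LSAux.tauP_zero L.θ) (LSAux.tauP_natDegree_le L.θ)
      (fun n hn => ⟨L.θ ⟨n, by omega⟩, LSAux.tauP_step L.θ n (by omega)⟩)
      (m:ℕ) m.isLt
    simpa [hw, hv] using h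
  have hwne : ∀ m, w m ≠ 0 := fun m h => hchain m (by rw [h, map_zero])
  have hEs_w : ∀ k m : Fin (d+1), (m:ℕ) < (k:ℕ) → primIdem L.As L.θs k (w m) = 0 := by
    intro k m hkm
    have hv0 : v = primIdem L.As L.θs 0 v :=
      (LSAux.E_apply_self L.As L.θs L.θs_inj (hus 0)).symm
    have hop := LSAux.band_aeval L.As L.θs hdim L.θs_inj L.hEigs L.A L.hFars
      (tauP d L.θ (m:ℕ)) k 0
      (Or.inr (by simp only [Fin.val_zero, zero_add]
                  exact lt_of_le_of_lt (LSAux.tauP_natDegree_le L.θ (m:ℕ)) hkm))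
    show primIdem L.As L.θs k (Polynomial.aeval L.A (tauP d L.θ (m:ℕ)) v) = 0
    conv_lhs => rw [hv0]
    rw [← Module.End.mul_apply, ← Module.End.mul_apply, hop, LinearMap.zero_apply]
  have hE_w : ∀ k m : Fin (d+1), (k:ℕ) < (m:ℕ) → primIdem L.A L.θ k (w m) = 0 := by
    intro k m hkm
    have hcomm := LSAux.E_mul_aeval L.A L.θ hdim L.θ_inj L.hEig (tauP d L.θ (m:ℕ)) k
    show primIdem L.A L.θ k (Polynomial.aeval L.A (tauP d L.θ (m:ℕ)) v) = 0
    rw [← Module.End.mul_apply, hcomm, LSAux.tauP_eval_eq_zero L.θ hkm, zero_smul,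
      LinearMap.zero_apply]
  have hus_li : LinearIndependent K us :=
    L.As.eigenvectors_linearIndependent' L.θs L.θs_inj us hus
  have hu_li : LinearIndependent K u :=
    L.A.eigenvectors_linearIndependent' L.θ L.θ_inj u hu
  have hli : LinearIndependent K w := by
    rw [Fintype.linearIndependent_iff]
    intro g hg
    suffices H : ∀ n : ℕ, ∀ m : Fin (d+1), d - (m:ℕ) ≤ n → g m = 0 from
      fun m => H d m (by omega)
    intro n
    induction n using Nat.strong_induction_on with
    | _ n ihn =>
      intro m hm
      have h0 : primIdem L.As L.θs m (∑ k, g k • w k) = 0 := by rw [hg, map_zero]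
      rw [map_sum] at h0
      have hterm : ∀ k : Fin (d+1), k ∈ Finset.univ → k ≠ m →
          primIdem L.As L.θs m (g k • w k) = 0 := by
        intro k _ hk
        rcases Nat.lt_or_ge (k:ℕ) (m:ℕ) with hlt | hge
        · rw [map_smul, hEs_w m k hlt, smul_zero]
        · have hgt : (m:ℕ) < (k:ℕ) := lt_of_le_of_ne hge (fun e => hk (Fin.ext e.symm))
          have hkd : (k:ℕ) < d + 1 := k.isLt
          have hk0 : g k = 0 := ihn (d - (k:ℕ)) (by omega) k (by omega)
          rw [hk0, zero_smul, map_zero]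
      rw [Finset.sum_eq_single m hterm (fun h => absurd (Finset.mem_univ m) h)] at h0
      rw [map_smul] at h0
      exact (smul_eq_zero.mp h0).resolve_right (hchain m)
  have hspan : Submodule.span K (Set.range w) = ⊤ :=
    hli.span_eq_top_of_card_eq_finrank (by rw [Fintype.card_fin, hdim])
  set s1 := Finset.univ.filter (fun j : Fin (d+1) => j ≤ i) with hs1
  set s2 := Finset.univ.filter (fun j : Fin (d+1) => i ≤ j) with hs2
  have hs1I : s1 = Finset.Iic i := by ext k; simp [hs1]
  have hs2I : s2 = Finset.Ici i := by ext k; simp [hs2]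
  have hS1 : (∑ j ∈ s1, LinearMap.range (primIdem L.As L.θs j))
      = Submodule.span K (us '' ↑s1) :=
    LSAux.sum_range_E L.As L.θs hdim L.θs_inj L.hEigs us hus s1
  have hS2 : (∑ j ∈ s2, LinearMap.range (primIdem L.A L.θ j))
      = Submodule.span K (u '' ↑s2) :=
    LSAux.sum_range_E L.A L.θ hdim L.θ_inj L.hEig u hu s2
  have hfr1 : Module.finrank K (Submodule.span K (us '' ↑s1)) = (i:ℕ) + 1 := by
    rw [LSAux.finrank_span_image L.As L.θs hdim L.θs_inj L.hEigs us hus_li s1, hs1I,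
      Fin.card_Iic]
  have hfr2 : Module.finrank K (Submodule.span K (u '' ↑s2)) = (d + 1) - (i:ℕ) := by
    rw [LSAux.finrank_span_image L.A L.θ hdim L.θ_inj L.hEig u hu_li s2, hs2I, Fin.card_Ici]
  have hmem1 : ∀ m : Fin (d+1), m ≤ i →
      w m ∈ (∑ j ∈ s1, LinearMap.range (primIdem L.As L.θs j)) := by
    intro m hm
    have hone := LinearMap.congr_fun (LSAux.E_sum L.As L.θs L.θs_inj) (w m)
    rw [LinearMap.sum_apply, Module.End.one_apply] at hone
    have hsumw : (∑ j ∈ s1, primIdem L.As L.θs j (w m)) = w m := by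
      conv_rhs => rw [← hone]
      refine Finset.sum_subset (Finset.subset_univ s1) fun j _ hj => ?_
      have hji : ¬ j ≤ i := by simpa [hs1] using hj
      have h2 : (i:ℕ) < (j:ℕ) := lt_of_not_ge hji
      have h1 : (m:ℕ) ≤ (i:ℕ) := hm
      exact hEs_w j m (by omega)
    rw [← hsumw]
    refine Submodule.sum_mem _ fun j hj => ?_
    rw [hS1]
    have hmemr : primIdem L.As L.θs j (w m) ∈ LinearMap.range (primIdem L.As L.θs j) :=
      ⟨w m, rfl⟩
    rw [LSAux.range_E L.As L.θs hdim L.θs_inj L.hEigs us hus j] at hmemr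
    have himg : us j ∈ us '' ↑s1 := Set.mem_image_of_mem us (Finset.mem_coe.mpr hj)
    exact Submodule.span_mono (Set.singleton_subset_iff.mpr himg) hmemr
  have hmem2 : ∀ m : Fin (d+1), i ≤ m →
      w m ∈ (∑ j ∈ s2, LinearMap.range (primIdem L.A L.θ j)) := by
    intro m hm
    have hone := LinearMap.congr_fun (LSAux.E_sum L.A L.θ L.θ_inj) (w m)
    rw [LinearMap.sum_apply, Module.End.one_apply] at hone
    have hsumw : (∑ j ∈ s2, primIdem L.A L.θ j (w m)) = w m := by
      conv_rhs => rw [← hone]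
      refine Finset.sum_subset (Finset.subset_univ s2) fun j _ hj => ?_
      have hji : ¬ i ≤ j := by simpa [hs2] using hj
      have h2 : (j:ℕ) < (i:ℕ) := lt_of_not_ge hji
      have h1 : (i:ℕ) ≤ (m:ℕ) := hm
      exact hE_w j m (by omega)
    rw [← hsumw]
    refine Submodule.sum_mem _ fun j hj => ?_
    rw [hS2]
    have hmemr : primIdem L.A L.θ j (w m) ∈ LinearMap.range (primIdem L.A L.θ j) :=
      ⟨w m, rfl⟩
    rw [LSAux.range_E L.A L.θ hdim L.θ_inj L.hEig u hu j] at hmemr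
    have himg : u j ∈ u '' ↑s2 := Set.mem_image_of_mem u (Finset.mem_coe.mpr hj)
    exact Submodule.span_mono (Set.singleton_subset_iff.mpr himg) hmemr
  have hsup : ((∑ j ∈ s1, LinearMap.range (primIdem L.As L.θs j)) ⊔
      (∑ j ∈ s2, LinearMap.range (primIdem L.A L.θ j))) = ⊤ := by
    rw [eq_top_iff, ← hspan, Submodule.span_le]
    rintro x ⟨m, rfl⟩
    rcases le_total m i with h | h
    · exact Submodule.mem_sup_left (hmem1 m h)
    · exact Submodule.mem_sup_right (hmem2 m h)
  have hinf : Module.finrank K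
      ↥((∑ j ∈ s1, LinearMap.range (primIdem L.As L.θs j)) ⊓
        (∑ j ∈ s2, LinearMap.range (primIdem L.A L.θ j))) = 1 := by
    have hkey := Submodule.finrank_sup_add_finrank_inf_eq
      (∑ j ∈ s1, LinearMap.range (primIdem L.As L.θs j))
      (∑ j ∈ s2, LinearMap.range (primIdem L.A L.θ j))
    rw [hsup, finrank_top, hdim, hS1, hS2, hfr1] at hkey
    have hid : (i:ℕ) < d + 1 := i.isLt
    have hfr2' : Module.finrank K (Submodule.span K (u '' ↑s2)) + (i:ℕ) = d + 1 := by
      rw [hfr2]; omega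
    rw [hS1, hS2]
    omega
  have hmap : Submodule.map (Polynomial.aeval L.A (tauP d L.θ (i:ℕ)))
      (LinearMap.range (primIdem L.As L.θs 0)) = Submodule.span K {w i} := by
    rw [LSAux.range_E L.As L.θs hdim L.θs_inj L.hEigs us hus 0, Submodule.map_span,
      Set.image_singleton]
  have hle : Submodule.span K {w i} ≤
      ((∑ j ∈ s1, LinearMap.range (primIdem L.As L.θs j)) ⊓
        (∑ j ∈ s2, LinearMap.range (primIdem L.A L.θ j))) := by
    rw [Submodule.span_le, Set.singleton_subset_iff]
    exact Submodule.mem_inf.mpr ⟨hmem1 i le_rfl, hmem2 i le_rfl⟩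
  have heq : Submodule.span K {w i} =
      ((∑ j ∈ s1, LinearMap.range (primIdem L.As L.θs j)) ⊓
        (∑ j ∈ s2, LinearMap.range (primIdem L.A L.θ j))) :=
    Submodule.eq_of_le_of_finrank_le hle
      (by rw [hinf, finrank_span_singleton (hwne i)])
  constructor
  · simp only [LeonardSystem.tau, LeonardSystem.Es, LeonardSystem.E]
    exact hmap.trans heq
  · simp only [LeonardSystem.Es, LeonardSystem.E]
    exact hinf
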